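/- Let ρ be a state on H_S ⊗ H_B with ρ = PρP (P = P_C ⊗ 1_B), and write ρ = Σ_{k,ℓ} ρ_{kℓ} ⊗ |k⟩⟨ℓ| with ρ_{kℓ} = P_C ρ_{kℓ} P_C. Suppose E ∼ {E_a} is CPTP with E_a = Ẽ_a + B_a where Ẽ satisfies the diagonal perfect OSQEC conditions via orthonormal operators {F_α} (i.e., ⟨k|Ẽ_a|ℓ⟩P_C = Σ_α e_{akℓ,α} F_α P_C and P_C F_α† F_β P_C = δ_{αβ}P_C). Then with recovery R_S ∼ {P_C F_α†}, the recovered system state satisfies Tr_B{((R_S⊗id)∘E)(ρ)} = Tr_B{ρ} + (1/2)Σ_{ℓ,m}[ρ_{ℓm}, Θ_{mℓ}] − (1/2)Σ_{ℓ,m}{ρ_{ℓm}, Δ_{mℓ}} + Σ_{a,k,ℓ,m} Σ_α D_{αa;kℓ} ρ_{ℓm} D_{αa;km}†, where Θ := Σ_a P(B_a†Ẽ_a − Ẽ_a†B_a)P, Δ := Σ_a P B_a† B_a P, Θ_{mℓ} := ⟨m|Θ|ℓ⟩, Δ_{mℓ} := ⟨m|Δ|ℓ⟩, and D_{αa;kℓ}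 := P_C F_α† ⟨k|B_a|ℓ⟩ P_C. -/

import Mathlib

open Matrix
open scoped BigOperators Kronecker ComplexOrder

namespace OSQEC12

noncomputable def trB {dS dB : ℕ}
    (M : Matrix (Fin dS × Fin dB) (Fin dS × Fin dB) ℂ) :
    Matrix (Fin dS) (Fin dS) ℂ :=
  Matrix.of fun i j => ∑ k : Fin dB, M (i, k) (j, k)

def pmel {dS dB : ℕ} (M : Matrix (Fin dS × Fin dB) (Fin dS × Fin dB) ℂ)
    (k ℓ : Fin dB) : Matrix (Fin dS) (Fin dS) ℂ :=
  Matrix.of fun i j => M (i, k) (j, ℓ)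

variable {dS dB : ℕ}

lemma pmel_mul (M N : Matrix (Fin dS × Fin dB) (Fin dS × Fin dB) ℂ) (k ℓ : Fin dB) :
    pmel (M * N) k ℓ = ∑ m, pmel M k m * pmel N m ℓ := by
  ext i j
  simp only [pmel, Matrix.of_apply, Matrix.mul_apply, Matrix.sum_apply,
    Fintype.sum_prod_type]
  rw [Finset.sum_comm]

lemma pmel_conjT (M : Matrix (Fin dS × Fin dB) (Fin dS × Fin dB) ℂ) (k ℓ : Fin dB) :
    pmel Mᴴ k ℓ = (pmel M ℓ k)ᴴ := by
  ext i j; simp [pmel, Matrix.conjTranspose_apply]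

lemma pmel_add (M N : Matrix (Fin dS × Fin dB) (Fin dS × Fin dB) ℂ) (k ℓ : Fin dB) :
    pmel (M + N) k ℓ = pmel M k ℓ + pmel N k ℓ := by
  ext i j; simp [pmel]

lemma pmel_sub (M N : Matrix (Fin dS × Fin dB) (Fin dS × Fin dB) ℂ) (k ℓ : Fin dB) :
    pmel (M - N) k ℓ = pmel M k ℓ - pmel N k ℓ := by
  ext i j; simp [pmel]

lemma pmel_sum {γ : Type*} [Fintype γ] (f : γ → Matrix (Fin dS × Fin dB) (Fin dS × Fin dB) ℂ)
    (k ℓ : Fin dB) : pmel (∑ x, f x) k ℓ = ∑ x, pmel (f x) k ℓ := by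
  ext i j; simp [pmel, Matrix.sum_apply]

lemma pmel_kron_left (X : Matrix (Fin dS) (Fin dS) ℂ)
    (M : Matrix (Fin dS × Fin dB) (Fin dS × Fin dB) ℂ) (k ℓ : Fin dB) :
    pmel ((X ⊗ₖ (1 : Matrix (Fin dB) (Fin dB) ℂ)) * M) k ℓ = X * pmel M k ℓ := by
  ext i j
  simp [pmel, Matrix.mul_apply, Fintype.sum_prod_type, Matrix.one_apply,
    kroneckerMap_apply, ite_mul, Finset.sum_ite_eq, eq_comm]

lemma pmel_kron_right (X : Matrix (Fin dS) (Fin dS) ℂ)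
    (M : Matrix (Fin dS × Fin dB) (Fin dS × Fin dB) ℂ) (k ℓ : Fin dB) :
    pmel (M * (X ⊗ₖ (1 : Matrix (Fin dB) (Fin dB) ℂ))) k ℓ = pmel M k ℓ * X := by
  ext i j
  simp [pmel, Matrix.mul_apply, Fintype.sum_prod_type, Matrix.one_apply,
    kroneckerMap_apply, mul_ite, Finset.sum_ite_eq, eq_comm]

lemma pmel_kron (X : Matrix (Fin dS) (Fin dS) ℂ) (k ℓ : Fin dB) :
    pmel (X ⊗ₖ (1 : Matrix (Fin dB) (Fin dB) ℂ)) k ℓ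
      = if k = ℓ then X else 0 := by
  ext i j
  by_cases h : k = ℓ <;>
    simp [pmel, kroneckerMap_apply, Matrix.one_apply, h]

lemma trB_eq (M : Matrix (Fin dS × Fin dB) (Fin dS × Fin dB) ℂ) :
    trB M = ∑ k, pmel M k k := by
  ext i j; simp [trB, pmel, Matrix.sum_apply]

lemma kron_one_conjT (X : Matrix (Fin dS) (Fin dS) ℂ) :
    (X ⊗ₖ (1 : Matrix (Fin dB) (Fin dB) ℂ))ᴴ = Xᴴ ⊗ₖ (1 : Matrix (Fin dB) (Fin dB) ℂ) := by
  ext ⟨i,k⟩ ⟨j,l⟩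
  simp only [Matrix.conjTranspose_apply, kroneckerMap_apply, Matrix.one_apply, eq_comm]
  split <;> simp

lemma reorder5 {M : Type*} [AddCommMonoid M] {A B C D E : Type*}
    [Fintype A] [Fintype B] [Fintype C] [Fintype D] [Fintype E]
    (f : A → B → C → D → E → M) :
    ∑ k : A, ∑ α : B, ∑ a : C, ∑ m : D, ∑ l : E, f k α a m l
      = ∑ a : C, ∑ k : A, ∑ l : E, ∑ m : D, ∑ α : B, f k α a m l := by
  calc ∑ k : A, ∑ α : B, ∑ a : C, ∑ m : D, ∑ l : E, f k α a m l
      = ∑ k : A, ∑ a : C, ∑ α : B, ∑ m : D, ∑ l : E, f k α a m l :=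
        Finset.sum_congr rfl fun _ _ => Finset.sum_comm
    _ = ∑ a : C, ∑ k : A, ∑ α : B, ∑ m : D, ∑ l : E, f k α a m l := Finset.sum_comm
    _ = ∑ a : C, ∑ k : A, ∑ m : D, ∑ α : B, ∑ l : E, f k α a m l :=
        Finset.sum_congr rfl fun _ _ => Finset.sum_congr rfl fun _ _ => Finset.sum_comm
    _ = ∑ a : C, ∑ k : A, ∑ m : D, ∑ l : E, ∑ α : B, f k α a m l :=
        Finset.sum_congr rfl fun _ _ => Finset.sum_congr rfl fun _ _ =>
          Finset.sum_congr rfl fun _ _ => Finset.sum_comm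
    _ = ∑ a : C, ∑ k : A, ∑ l : E, ∑ m : D, ∑ α : B, f k α a m l :=
        Finset.sum_congr rfl fun _ _ => Finset.sum_congr rfl fun _ _ => Finset.sum_comm

lemma reorder4 {M : Type*} [AddCommMonoid M] {A B C D : Type*}
    [Fintype A] [Fintype B] [Fintype C] [Fintype D]
    (f : A → B → C → D → M) :
    ∑ a : A, ∑ k : B, ∑ l : C, ∑ m : D, f a k l m
      = ∑ l : C, ∑ m : D, ∑ a : A, ∑ k : B, f a k l m := by
  calc ∑ a : A, ∑ k : B, ∑ l : C, ∑ m : D, f a k l m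
      = ∑ a : A, ∑ l : C, ∑ k : B, ∑ m : D, f a k l m :=
        Finset.sum_congr rfl fun _ _ => Finset.sum_comm
    _ = ∑ l : C, ∑ a : A, ∑ k : B, ∑ m : D, f a k l m := Finset.sum_comm
    _ = ∑ l : C, ∑ a : A, ∑ m : D, ∑ k : B, f a k l m :=
        Finset.sum_congr rfl fun _ _ => Finset.sum_congr rfl fun _ _ => Finset.sum_comm
    _ = ∑ l : C, ∑ m : D, ∑ a : A, ∑ k : B, f a k l m :=
        Finset.sum_congr rfl fun _ _ => Finset.sum_comm

theorem stmt_12 {dS dB : ℕ} {ι α' : Type*} [Fintype ι] [Fintype α'] [DecidableEq α']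
    (PC : Matrix (Fin dS) (Fin dS) ℂ)
    (hPCH : PC.IsHermitian) (hPCproj : PC * PC = PC)
    (E Et B : ι → Matrix (Fin dS × Fin dB) (Fin dS × Fin dB) ℂ)
    (hEB : ∀ a, E a = Et a + B a)
    (hTP : ∑ a, (E a)ᴴ * E a = 1)
    (F : α' → Matrix (Fin dS) (Fin dS) ℂ)
    (hF : ∀ α β, PC * (F α)ᴴ * F β * PC
        = (if α = β then (1 : ℂ) else 0) • PC)
    (e : ι → Fin dB → Fin dB → α' → ℂ)
    (he : ∀ a k ℓ, pmel (Et a) k ℓ * PC = ∑ α, e a k ℓ α • (F α * PC))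
    (Θ Δ : Matrix (Fin dS × Fin dB) (Fin dS × Fin dB) ℂ)
    (hΘ : Θ = ∑ a, (PC ⊗ₖ (1 : Matrix (Fin dB) (Fin dB) ℂ)) *
        ((B a)ᴴ * Et a - (Et a)ᴴ * B a) * (PC ⊗ₖ (1 : Matrix (Fin dB) (Fin dB) ℂ)))
    (hΔ : Δ = ∑ a, (PC ⊗ₖ (1 : Matrix (Fin dB) (Fin dB) ℂ)) *
        ((B a)ᴴ * B a) * (PC ⊗ₖ (1 : Matrix (Fin dB) (Fin dB) ℂ)))
    (D : α' → ι → Fin dB → Fin dB → Matrix (Fin dS) (Fin dS) ℂ)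
    (hD : ∀ α a k ℓ, D α a k ℓ = PC * (F α)ᴴ * pmel (B a) k ℓ * PC)
    (ρ : Matrix (Fin dS × Fin dB) (Fin dS × Fin dB) ℂ)
    (hρPSD : ρ.PosSemidef) (hρtr : ρ.trace = 1)
    (hcode : (PC ⊗ₖ (1 : Matrix (Fin dB) (Fin dB) ℂ)) * ρ *
        (PC ⊗ₖ (1 : Matrix (Fin dB) (Fin dB) ℂ)) = ρ) :
    trB (∑ α, ((PC * (F α)ᴴ) ⊗ₖ (1 : Matrix (Fin dB) (Fin dB) ℂ)) *
          (∑ a, E a * ρ * (E a)ᴴ) *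
          ((PC * (F α)ᴴ) ⊗ₖ (1 : Matrix (Fin dB) (Fin dB) ℂ))ᴴ)
      = trB ρ
        + (1 / 2 : ℂ) • ∑ ℓ, ∑ m,
            (pmel ρ ℓ m * pmel Θ m ℓ - pmel Θ m ℓ * pmel ρ ℓ m)
        - (1 / 2 : ℂ) • ∑ ℓ, ∑ m,
            (pmel ρ ℓ m * pmel Δ m ℓ + pmel Δ m ℓ * pmel ρ ℓ m)
        + ∑ a, ∑ k, ∑ ℓ, ∑ m, ∑ α,
            D α a k ℓ * pmel ρ ℓ m * (D α a k m)ᴴ := by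
  classical
  have hPC : PCᴴ = PC := hPCH
  -- basic sandwich facts for ρ
  have hsand : ∀ ℓ m, PC * pmel ρ ℓ m * PC = pmel ρ ℓ m := by
    intro ℓ m
    conv_rhs => rw [← hcode, pmel_kron_right, pmel_kron_left]
  have hPR : ∀ ℓ m, PC * pmel ρ ℓ m = pmel ρ ℓ m := by
    intro ℓ m
    conv_lhs => rw [← hsand ℓ m]
    simp only [← mul_assoc, hPCproj]
    exact hsand ℓ m
  have hRP : ∀ ℓ m, pmel ρ ℓ m * PC = pmel ρ ℓ m := by
    intro ℓ m
    conv_lhs => rw [← hsand ℓ m]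
    simp only [mul_assoc, hPCproj]
    simpa only [mul_assoc] using hsand ℓ m
  have hProjX : ∀ X : Matrix (Fin dS) (Fin dS) ℂ, PC * (PC * X) = PC * X := by
    intro X; rw [← mul_assoc, hPCproj]
  have hsandX : ∀ ℓ m (X : Matrix (Fin dS) (Fin dS) ℂ),
      PC * (pmel ρ ℓ m * (PC * X)) = pmel ρ ℓ m * X := by
    intro ℓ m X; rw [← mul_assoc, ← mul_assoc, hsand]
  -- adjoint form of `he`
  have heT : ∀ a k m, PC * (pmel (Et a) k m)ᴴ
      = ∑ α, (starRingEnd ℂ) (e a k m α) • (PC * (F α)ᴴ) := by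
    intro a k m
    have h := congrArg Matrix.conjTranspose (he a k m)
    simpa [Matrix.conjTranspose_mul, hPC, Matrix.conjTranspose_smul,
      Matrix.conjTranspose_sum] using h
  -- right-extended versions
  have hFX0 : ∀ α β, PC * ((F α)ᴴ * (F β * PC)) = (if α = β then (1:ℂ) else 0) • PC := by
    intro α β
    simpa [mul_assoc] using hF α β
  have hFX : ∀ α β (X : Matrix (Fin dS) (Fin dS) ℂ),
      PC * ((F α)ᴴ * (F β * (PC * X))) = (if α = β then (1:ℂ) else 0) • (PC * X) := by
    intro α β X
    have h := congrArg (fun M => M * X) (hF α β)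
    simpa [mul_assoc, smul_mul_assoc] using h
  have heX : ∀ a k ℓ (X : Matrix (Fin dS) (Fin dS) ℂ),
      pmel (Et a) k ℓ * (PC * X) = ∑ α, e a k ℓ α • (F α * (PC * X)) := by
    intro a k ℓ X
    have h := congrArg (fun M => M * X) (he a k ℓ)
    simpa [mul_assoc, smul_mul_assoc, Finset.sum_mul] using h
  have heTX : ∀ a k m (X : Matrix (Fin dS) (Fin dS) ℂ),
      PC * ((pmel (Et a) k m)ᴴ * X)
        = ∑ α, (starRingEnd ℂ) (e a k m α) • (PC * ((F α)ᴴ * X)) := by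
    intro a k m X
    have h := congrArg (fun M => M * X) (heT a k m)
    simpa [mul_assoc, smul_mul_assoc, Finset.sum_mul] using h
  -- the tail lemma: ρ_{ℓm} (Ẽ_{km})ᴴ F_α P_C = conj(e) ρ_{ℓm}
  have t1 : ∀ a ℓ m k α,
      pmel ρ ℓ m * ((pmel (Et a) k m)ᴴ * (F α * PC))
        = (starRingEnd ℂ) (e a k m α) • pmel ρ ℓ m := by
    intro a ℓ m k α
    conv_lhs => rw [← hRP ℓ m, mul_assoc]
    rw [heTX a k m (F α * PC)]
    simp only [hFX0, Finset.mul_sum, mul_smul_comm, smul_smul, mul_ite, mul_one, mul_zero,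
      ite_smul, zero_smul, Finset.sum_ite_eq', Finset.mem_univ, if_true, hRP]
    simp [Finset.sum_ite_eq']
  -- four α-sums
  have hTT : ∀ a k ℓ m,
      ∑ α, PC * ((F α)ᴴ * (pmel (Et a) k ℓ * (pmel ρ ℓ m * ((pmel (Et a) k m)ᴴ * (F α * PC)))))
        = (∑ β, e a k ℓ β * (starRingEnd ℂ) (e a k m β)) • pmel ρ ℓ m := by
    intro a k ℓ m
    calc ∑ α, PC * ((F α)ᴴ * (pmel (Et a) k ℓ * (pmel ρ ℓ m * ((pmel (Et a) k m)ᴴ * (F α * PC)))))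
        = ∑ α, (starRingEnd ℂ) (e a k m α) •
            (PC * ((F α)ᴴ * (pmel (Et a) k ℓ * (PC * pmel ρ ℓ m)))) := by
          refine Finset.sum_congr rfl fun α _ => ?_
          rw [t1, hPR]
          simp [mul_smul_comm]
      _ = ∑ α, (starRingEnd ℂ) (e a k m α) •
            (PC * ((F α)ᴴ * (∑ β, e a k ℓ β • (F β * (PC * pmel ρ ℓ m))))) := by
          refine Finset.sum_congr rfl fun α _ => ?_
          rw [heX]
      _ = ∑ α, ∑ β, ((starRingEnd ℂ) (e a k m α) * e a k ℓ β) •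
            ((if α = β then (1:ℂ) else 0) • (PC * pmel ρ ℓ m)) := by
          refine Finset.sum_congr rfl fun α _ => ?_
          simp [Finset.mul_sum, mul_smul_comm, hFX, smul_smul, Finset.smul_sum]
      _ = (∑ β, e a k ℓ β * (starRingEnd ℂ) (e a k m β)) • pmel ρ ℓ m := by
          simp only [smul_smul, mul_ite, mul_one, mul_zero, ite_smul, zero_smul,
            smul_ite, smul_zero, one_smul, Finset.sum_ite_eq, Finset.mem_univ, if_true,
            hPR, Finset.sum_smul]
          refine Finset.sum_congr rfl fun β _ => ?_
          rw [mul_comm]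
  have hTB : ∀ a k ℓ m,
      ∑ α, PC * ((F α)ᴴ * (pmel (Et a) k ℓ * (pmel ρ ℓ m * ((pmel (B a) k m)ᴴ * (F α * PC)))))
        = pmel ρ ℓ m * (PC * ((pmel (B a) k m)ᴴ * (pmel (Et a) k ℓ * PC))) := by
    intro a k ℓ m
    have hstep : ∀ α, pmel ρ ℓ m * ((pmel (B a) k m)ᴴ * (F α * PC))
        = PC * (pmel ρ ℓ m * ((pmel (B a) k m)ᴴ * (F α * PC))) := by
      intro α
      conv_rhs => rw [← mul_assoc, hPR]
    calc ∑ α, PC * ((F α)ᴴ * (pmel (Et a) k ℓ * (pmel ρ ℓ m * ((pmel (B a) k m)ᴴ * (F α * PC)))))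
        = ∑ α, PC * ((F α)ᴴ * (∑ β, e a k ℓ β •
            (F β * (PC * (pmel ρ ℓ m * ((pmel (B a) k m)ᴴ * (F α * PC))))))) := by
          refine Finset.sum_congr rfl fun α _ => ?_
          conv_lhs => rw [hstep α, heX]
      _ = ∑ α, ∑ β, e a k ℓ β • ((if α = β then (1:ℂ) else 0) •
            (PC * (pmel ρ ℓ m * ((pmel (B a) k m)ᴴ * (F α * PC))))) := by
          refine Finset.sum_congr rfl fun α _ => ?_
          simp [Finset.mul_sum, mul_smul_comm, hFX]
      _ = ∑ β, e a k ℓ β • (pmel ρ ℓ m * ((pmel (B a) k m)ᴴ * (F β * PC))) := by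
          simp only [smul_smul, mul_ite, mul_one, mul_zero, ite_smul, zero_smul,
            smul_ite, smul_zero, one_smul, Finset.sum_ite_eq, Finset.mem_univ, if_true]
          refine Finset.sum_congr rfl fun β _ => ?_
          rw [← hstep β]
      _ = pmel ρ ℓ m * ((pmel (B a) k m)ᴴ * (pmel (Et a) k ℓ * PC)) := by
          rw [he]
          simp [Finset.mul_sum, mul_smul_comm]
      _ = pmel ρ ℓ m * (PC * ((pmel (B a) k m)ᴴ * (pmel (Et a) k ℓ * PC))) := by
          conv_rhs => rw [← mul_assoc, hRP]
  have hBT : ∀ a k ℓ m,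
      ∑ α, PC * ((F α)ᴴ * (pmel (B a) k ℓ * (pmel ρ ℓ m * ((pmel (Et a) k m)ᴴ * (F α * PC)))))
        = PC * ((pmel (Et a) k m)ᴴ * (pmel (B a) k ℓ * PC)) * pmel ρ ℓ m := by
    intro a k ℓ m
    calc ∑ α, PC * ((F α)ᴴ * (pmel (B a) k ℓ * (pmel ρ ℓ m * ((pmel (Et a) k m)ᴴ * (F α * PC)))))
        = ∑ α, (starRingEnd ℂ) (e a k m α) •
            (PC * ((F α)ᴴ * (pmel (B a) k ℓ * pmel ρ ℓ m))) := by
          refine Finset.sum_congr rfl fun α _ => ?_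
          rw [t1]
          simp [mul_smul_comm]
      _ = (∑ α, (starRingEnd ℂ) (e a k m α) • (PC * (F α)ᴴ)) *
            (pmel (B a) k ℓ * pmel ρ ℓ m) := by
          simp [Finset.sum_mul, smul_mul_assoc, mul_assoc]
      _ = PC * (pmel (Et a) k m)ᴴ * (pmel (B a) k ℓ * pmel ρ ℓ m) := by
          rw [← heT]
      _ = PC * ((pmel (Et a) k m)ᴴ * (pmel (B a) k ℓ * PC)) * pmel ρ ℓ m := by
          conv_lhs => rw [← hPR ℓ m]
          simp only [mul_assoc]
  have hBB : ∀ a k ℓ m,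
      ∑ α, PC * ((F α)ᴴ * (pmel (B a) k ℓ * (pmel ρ ℓ m * ((pmel (B a) k m)ᴴ * (F α * PC)))))
        = ∑ α, D α a k ℓ * pmel ρ ℓ m * (D α a k m)ᴴ := by
    intro a k ℓ m
    refine Finset.sum_congr rfl fun α _ => ?_
    rw [hD, hD]
    simp only [Matrix.conjTranspose_mul, hPC, Matrix.conjTranspose_conjTranspose]
    simp only [mul_assoc, hProjX]
    rw [hsandX]
  -- combined per-(a,k,ℓ,m) term
  have hterm : ∀ a k ℓ m,
      ∑ α, PC * ((F α)ᴴ * (pmel (E a) k ℓ * (pmel ρ ℓ m * ((pmel (E a) k m)ᴴ * (F α * PC)))))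
        = (∑ β, e a k ℓ β * (starRingEnd ℂ) (e a k m β)) • pmel ρ ℓ m
          + pmel ρ ℓ m * (PC * ((pmel (B a) k m)ᴴ * (pmel (Et a) k ℓ * PC)))
          + PC * ((pmel (Et a) k m)ᴴ * (pmel (B a) k ℓ * PC)) * pmel ρ ℓ m
          + ∑ α, D α a k ℓ * pmel ρ ℓ m * (D α a k m)ᴴ := by
    intro a k ℓ m
    simp only [hEB, pmel_add, Matrix.conjTranspose_add, add_mul, mul_add,
      Finset.sum_add_distrib]
    rw [hTT, hTB, hBT, hBB]
    abel
  -- trace preservation, sandwiched and at partial matrix elements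
  have hTPk : ∀ ℓ m, ∑ a, ∑ k, PC * ((pmel (E a) k m)ᴴ * (pmel (E a) k ℓ * PC))
      = (if m = ℓ then (1:ℂ) else 0) • PC := by
    intro ℓ m
    have hP1 : (PC ⊗ₖ (1 : Matrix (Fin dB) (Fin dB) ℂ)) * (∑ a, (E a)ᴴ * E a) *
        (PC ⊗ₖ (1 : Matrix (Fin dB) (Fin dB) ℂ))
        = (PC ⊗ₖ (1 : Matrix (Fin dB) (Fin dB) ℂ)) * (PC ⊗ₖ (1 : Matrix (Fin dB) (Fin dB) ℂ)) := by
      rw [hTP, mul_one]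
    have h := congrArg (fun M => pmel M m ℓ) hP1
    simp only at h
    rw [pmel_kron_right, pmel_kron_left, pmel_kron_left, pmel_kron] at h
    simp only [pmel_sum, pmel_mul, pmel_conjT] at h
    calc ∑ a, ∑ k, PC * ((pmel (E a) k m)ᴴ * (pmel (E a) k ℓ * PC))
        = PC * (∑ a, ∑ k, (pmel (E a) k m)ᴴ * pmel (E a) k ℓ) * PC := by
          simp [Finset.mul_sum, Finset.sum_mul, mul_assoc]
      _ = PC * (if m = ℓ then PC else 0) := by
          rw [← h]
      _ = (if m = ℓ then (1:ℂ) else 0) • PC := by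
          split <;> simp [hPCproj]
  -- coefficient identity from orthonormality
  have hcc : ∀ a k ℓ m, PC * ((pmel (Et a) k m)ᴴ * (pmel (Et a) k ℓ * PC))
      = (∑ β, e a k ℓ β * (starRingEnd ℂ) (e a k m β)) • PC := by
    intro a k ℓ m
    rw [heTX a k m (pmel (Et a) k ℓ * PC), he a k ℓ]
    calc ∑ α, (starRingEnd ℂ) (e a k m α) •
          (PC * ((F α)ᴴ * (∑ β, e a k ℓ β • (F β * PC))))
        = ∑ α, ∑ β, ((starRingEnd ℂ) (e a k m α) * e a k ℓ β) •
            ((if α = β then (1:ℂ) else 0) • PC) := by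
          refine Finset.sum_congr rfl fun α _ => ?_
          simp [Finset.mul_sum, mul_smul_comm, hFX0, smul_smul, Finset.smul_sum]
      _ = (∑ β, e a k ℓ β * (starRingEnd ℂ) (e a k m β)) • PC := by
          simp only [smul_smul, mul_ite, mul_one, mul_zero, ite_smul, zero_smul,
            smul_ite, smul_zero, one_smul, Finset.sum_ite_eq, Finset.mem_univ, if_true,
            Finset.sum_smul]
          refine Finset.sum_congr rfl fun β _ => ?_
          rw [mul_comm]
  -- trace-preservation expanded into the four pieces
  have hTP' : ∀ ℓ m, ∑ a, ∑ k,
      ((∑ β, e a k ℓ β * (starRingEnd ℂ) (e a k m β)) • PC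
        + PC * ((pmel (Et a) k m)ᴴ * (pmel (B a) k ℓ * PC))
        + PC * ((pmel (B a) k m)ᴴ * (pmel (Et a) k ℓ * PC))
        + PC * ((pmel (B a) k m)ᴴ * (pmel (B a) k ℓ * PC)))
      = (if m = ℓ then (1:ℂ) else 0) • PC := by
    intro ℓ m
    rw [← hTPk ℓ m]
    refine Finset.sum_congr rfl fun a _ => Finset.sum_congr rfl fun k _ => ?_
    rw [hEB]
    simp only [pmel_add, Matrix.conjTranspose_add, add_mul, mul_add]
    rw [← hcc a k ℓ m]
    abel
  -- pmel of Θ and Δ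
  have hΘp : ∀ m ℓ, pmel Θ m ℓ = ∑ a, ∑ k,
      (PC * ((pmel (B a) k m)ᴴ * (pmel (Et a) k ℓ * PC))
        - PC * ((pmel (Et a) k m)ᴴ * (pmel (B a) k ℓ * PC))) := by
    intro m ℓ
    rw [hΘ, pmel_sum]
    refine Finset.sum_congr rfl fun a _ => ?_
    rw [pmel_kron_right, pmel_kron_left, pmel_sub, pmel_mul, pmel_mul]
    simp [pmel_conjT, Finset.sum_sub_distrib, Finset.mul_sum, Finset.sum_mul,
      sub_mul, mul_sub, mul_assoc]
  have hΔp : ∀ m ℓ, pmel Δ m ℓ = ∑ a, ∑ k,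
      PC * ((pmel (B a) k m)ᴴ * (pmel (B a) k ℓ * PC)) := by
    intro m ℓ
    rw [hΔ, pmel_sum]
    refine Finset.sum_congr rfl fun a _ => ?_
    rw [pmel_kron_right, pmel_kron_left, pmel_mul]
    simp [pmel_conjT, Finset.mul_sum, Finset.sum_mul, mul_assoc]
  -- step 1: expansion of the LHS
  have step1 : trB (∑ α, ((PC * (F α)ᴴ) ⊗ₖ (1 : Matrix (Fin dB) (Fin dB) ℂ)) *
          (∑ a, E a * ρ * (E a)ᴴ) *
          ((PC * (F α)ᴴ) ⊗ₖ (1 : Matrix (Fin dB) (Fin dB) ℂ))ᴴ)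
      = ∑ k, ∑ α, ∑ a, ∑ m, ∑ ℓ,
          PC * ((F α)ᴴ * (pmel (E a) k ℓ * (pmel ρ ℓ m * ((pmel (E a) k m)ᴴ * (F α * PC))))) := by
    rw [trB_eq]
    simp only [kron_one_conjT, Matrix.conjTranspose_mul, hPC,
      Matrix.conjTranspose_conjTranspose, pmel_sum, pmel_kron_right, pmel_kron_left]
    refine Finset.sum_congr rfl fun k _ => Finset.sum_congr rfl fun α _ => ?_
    simp only [pmel_sum, pmel_mul, pmel_conjT]
    simp [Finset.mul_sum, Finset.sum_mul, mul_assoc]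
  -- the main reduction (without the D-term)
  have mainlem : ∑ a, ∑ k, ∑ ℓ, ∑ m,
      ((∑ β, e a k ℓ β * (starRingEnd ℂ) (e a k m β)) • pmel ρ ℓ m
        + pmel ρ ℓ m * (PC * ((pmel (B a) k m)ᴴ * (pmel (Et a) k ℓ * PC)))
        + PC * ((pmel (Et a) k m)ᴴ * (pmel (B a) k ℓ * PC)) * pmel ρ ℓ m)
      = trB ρ
        + (1 / 2 : ℂ) • ∑ ℓ, ∑ m,
            (pmel ρ ℓ m * pmel Θ m ℓ - pmel Θ m ℓ * pmel ρ ℓ m)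
        - (1 / 2 : ℂ) • ∑ ℓ, ∑ m,
            (pmel ρ ℓ m * pmel Δ m ℓ + pmel Δ m ℓ * pmel ρ ℓ m) := by
    rw [reorder4, trB_eq]
    have htr : (∑ ℓ, pmel ρ ℓ ℓ)
        = ∑ ℓ, ∑ m, (if m = ℓ then (1:ℂ) else 0) • pmel ρ ℓ m := by
      refine Finset.sum_congr rfl fun ℓ _ => ?_
      simp [ite_smul]
    rw [htr]
    simp only [Finset.smul_sum]
    rw [← Finset.sum_add_distrib, ← Finset.sum_sub_distrib]
    simp only [← Finset.sum_add_distrib, ← Finset.sum_sub_distrib]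
    refine Finset.sum_congr rfl fun ℓ _ => Finset.sum_congr rfl fun m _ => ?_
    have hΘ2 : pmel Θ m ℓ
        = (∑ a, ∑ k, PC * ((pmel (B a) k m)ᴴ * (pmel (Et a) k ℓ * PC)))
          - (∑ a, ∑ k, PC * ((pmel (Et a) k m)ᴴ * (pmel (B a) k ℓ * PC))) := by
      rw [hΘp]
      simp only [Finset.sum_sub_distrib]
    rw [hΘ2, hΔp]
    -- abbreviations
    have hadd : (∑ a, ∑ k, (∑ β, e a k ℓ β * (starRingEnd ℂ) (e a k m β)) • PC)
        + (∑ a, ∑ k, PC * ((pmel (Et a) k m)ᴴ * (pmel (B a) k ℓ * PC)))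
        + (∑ a, ∑ k, PC * ((pmel (B a) k m)ᴴ * (pmel (Et a) k ℓ * PC)))
        + (∑ a, ∑ k, PC * ((pmel (B a) k m)ᴴ * (pmel (B a) k ℓ * PC)))
        = (if m = ℓ then (1:ℂ) else 0) • PC := by
      rw [← hTP' ℓ m]
      simp only [Finset.sum_add_distrib]
    set R := pmel ρ ℓ m with hR
    set CP := ∑ a, ∑ k, (∑ β, e a k ℓ β * (starRingEnd ℂ) (e a k m β)) • PC with hCP
    set A := ∑ a, ∑ k, PC * ((pmel (Et a) k m)ᴴ * (pmel (B a) k ℓ * PC)) with hA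
    set Bb := ∑ a, ∑ k, PC * ((pmel (B a) k m)ᴴ * (pmel (Et a) k ℓ * PC)) with hBb
    set Dd := ∑ a, ∑ k, PC * ((pmel (B a) k m)ᴴ * (pmel (B a) k ℓ * PC)) with hDd
    have hsplit : ∑ a, ∑ k,
        ((∑ β, e a k ℓ β * (starRingEnd ℂ) (e a k m β)) • pmel ρ ℓ m
          + pmel ρ ℓ m * (PC * ((pmel (B a) k m)ᴴ * (pmel (Et a) k ℓ * PC)))
          + PC * ((pmel (Et a) k m)ᴴ * (pmel (B a) k ℓ * PC)) * pmel ρ ℓ m)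
        = CP * R + R * Bb + A * R := by
      rw [hCP, hA, hBb, hR]
      simp only [Finset.sum_add_distrib, Finset.mul_sum, Finset.sum_mul,
        smul_mul_assoc, hPR]
    rw [hsplit]
    have h3 : CP * R = R * CP := by
      rw [hCP, hR]
      simp only [Finset.sum_mul, Finset.mul_sum, smul_mul_assoc, mul_smul_comm,
        hPR, hRP]
    have h1 : CP * R + A * R + Bb * R + Dd * R = (if m = ℓ then (1:ℂ) else 0) • R := by
      have h := congrArg (fun M => M * R) hadd
      have hPR' : PC * R = R := hPR ℓ m
      simpa only [add_mul, smul_mul_assoc, hPR'] using h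
    have h2 : R * CP + R * A + R * Bb + R * Dd = (if m = ℓ then (1:ℂ) else 0) • R := by
      have h := congrArg (fun M => R * M) hadd
      have hRP' : R * PC = R := hRP ℓ m
      simpa only [mul_add, mul_smul_comm, hRP'] using h
    simp only [mul_sub, sub_mul]
    linear_combination (norm := module) (1/2:ℂ) • h1 + (1/2:ℂ) • h2 + (1/2:ℂ) • h3
  -- assemble
  calc trB (∑ α, ((PC * (F α)ᴴ) ⊗ₖ (1 : Matrix (Fin dB) (Fin dB) ℂ)) *
          (∑ a, E a * ρ * (E a)ᴴ) *
          ((PC * (F α)ᴴ) ⊗ₖ (1 : Matrix (Fin dB) (Fin dB) ℂ))ᴴ)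
      = ∑ k, ∑ α, ∑ a, ∑ m, ∑ ℓ,
          PC * ((F α)ᴴ * (pmel (E a) k ℓ * (pmel ρ ℓ m * ((pmel (E a) k m)ᴴ * (F α * PC))))) := step1
    _ = ∑ a, ∑ k, ∑ ℓ, ∑ m, ∑ α,
          PC * ((F α)ᴴ * (pmel (E a) k ℓ * (pmel ρ ℓ m * ((pmel (E a) k m)ᴴ * (F α * PC))))) :=
        reorder5 _
    _ = ∑ a, ∑ k, ∑ ℓ, ∑ m,
          ((∑ β, e a k ℓ β * (starRingEnd ℂ) (e a k m β)) • pmel ρ ℓ m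
            + pmel ρ ℓ m * (PC * ((pmel (B a) k m)ᴴ * (pmel (Et a) k ℓ * PC)))
            + PC * ((pmel (Et a) k m)ᴴ * (pmel (B a) k ℓ * PC)) * pmel ρ ℓ m
            + ∑ α, D α a k ℓ * pmel ρ ℓ m * (D α a k m)ᴴ) := by
        refine Finset.sum_congr rfl fun a _ => Finset.sum_congr rfl fun k _ =>
          Finset.sum_congr rfl fun ℓ _ => Finset.sum_congr rfl fun m _ => ?_
        exact hterm a k ℓ m
    _ = (∑ a, ∑ k, ∑ ℓ, ∑ m,
          ((∑ β, e a k ℓ β * (starRingEnd ℂ) (e a k m β)) • pmel ρ ℓ m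
            + pmel ρ ℓ m * (PC * ((pmel (B a) k m)ᴴ * (pmel (Et a) k ℓ * PC)))
            + PC * ((pmel (Et a) k m)ᴴ * (pmel (B a) k ℓ * PC)) * pmel ρ ℓ m))
          + ∑ a, ∑ k, ∑ ℓ, ∑ m, ∑ α, D α a k ℓ * pmel ρ ℓ m * (D α a k m)ᴴ := by
        simp only [Finset.sum_add_distrib]
    _ = trB ρ
        + (1 / 2 : ℂ) • ∑ ℓ, ∑ m,
            (pmel ρ ℓ m * pmel Θ m ℓ - pmel Θ m ℓ * pmel ρ ℓ m)
        - (1 / 2 : ℂ) • ∑ ℓ, ∑ m,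
            (pmel ρ ℓ m * pmel Δ m ℓ + pmel Δ m ℓ * pmel ρ ℓ m)
        + ∑ a, ∑ k, ∑ ℓ, ∑ m, ∑ α, D α a k ℓ * pmel ρ ℓ m * (D α a k m)ᴴ := by
        rw [mainlem]

end OSQEC12
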